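/- In the traversal Trav of a rooted ordered tree, for every vertex v, the number of vertex-visits strictly before the second visit to v is even if and only if the depth of v is odd. Consequently, for each vertex exactly one of ν_v^{(1)}, ν_v^{(2)} is even. -/

import Mathlib

/-- A finite rooted ordered tree: a root with an ordered list of subtrees. -/
inductive OTree : Type where
  | node : List OTree → OTree

mutual
/-- The visit sequence of the traversal `Trav` of the subtree rooted at the
vertex with address `a`; each vertex is visited exactly twice. -/
def trav : OTree → List ℕ → List (List ℕ)
  | .node [], a => [a, a]
  | .node (t :: ts), a => a :: (travList (t :: ts) a 0 ++ [a])

def travList : List OTree → List ℕ → ℕ → List (List ℕ)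
  | [], _, _ => []
  | t :: ts, a, i => trav t (a ++ [i]) ++ travList ts a (i + 1)
end

mutual
theorem trav_len_even (t : OTree) (b : List ℕ) : Even (trav t b).length := by
  match t with
  | .node [] => simp [trav]
  | .node (t₀ :: ts) =>
    have := travList_len_even (t₀ :: ts) b 0
    simp only [trav, List.length_cons, List.length_append, List.length_singleton, List.length_nil]
    rw [Nat.even_iff] at this ⊢
    omega
theorem travList_len_even (ts : List OTree) (b : List ℕ) (i : ℕ) :
    Even (travList ts b i).length := by
  match ts with
  | [] => simp [travList]
  | t₀ :: rest =>
    have h1 := trav_len_even t₀ (b ++ [i])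
    have h2 := travList_len_even rest b (i + 1)
    simp only [travList, List.length_append]
    exact h1.add h2
end

mutual
theorem trav_mem_len (t : OTree) (b : List ℕ) : ∀ x ∈ trav t b, b.length ≤ x.length := by
  match t with
  | .node [] =>
    intro x hx
    simp only [trav, List.mem_cons, List.mem_singleton] at hx
    rcases hx with h | h | h
    · subst h; exact le_refl _
    · subst h; exact le_refl _
    · simp at h
  | .node (t₀ :: ts) =>
    intro x hx
    simp only [trav, List.mem_cons, List.mem_append, List.mem_singleton] at hx
    rcases hx with h | h | h | h
    · subst h; exact le_refl _
    · exact le_of_lt (travList_mem_len (t₀ :: ts) b 0 x h)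
    · subst h; exact le_refl _
    · simp at h
theorem travList_mem_len (ts : List OTree) (b : List ℕ) (i : ℕ) :
    ∀ x ∈ travList ts b i, b.length < x.length := by
  match ts with
  | [] => intro x hx; simp [travList] at hx
  | t₀ :: rest =>
    intro x hx
    simp only [travList, List.mem_append] at hx
    rcases hx with h | h
    · have := trav_mem_len t₀ (b ++ [i]) x h
      simp only [List.length_append, List.length_singleton] at this
      omega
    · exact travList_mem_len rest b (i + 1) x h
end

section
variable {α : Type*} [BEq α] [LawfulBEq α] {a b : α} {l l₁ l₂ : List α}

theorem myIdx_cons_self : (a :: l).idxOf a = 0 := by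
  simp [List.idxOf_cons]

theorem myIdx_cons_ne (h : b ≠ a) : (b :: l).idxOf a = l.idxOf a + 1 := by
  simp [List.idxOf_cons, beq_eq_false_iff_ne.mpr h]

theorem myIdx_lt_length (h : a ∈ l) : l.idxOf a < l.length := by
  induction l with
  | nil => simp at h
  | cons x xs ih =>
    rw [List.idxOf_cons]
    by_cases hx : x == a
    · simp [hx]
    · simp only [hx, cond_false, List.length_cons]
      have : a ∈ xs := by
        rcases List.mem_cons.mp h with h' | h'
        · exact absurd (h' ▸ beq_self_eq_true a) (by simpa [h'] using hx)
        · exact h'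
      exact Nat.succ_lt_succ (ih this)

theorem myIdx_append_of_mem (h : a ∈ l₁) : (l₁ ++ l₂).idxOf a = l₁.idxOf a := by
  induction l₁ with
  | nil => simp at h
  | cons x xs ih =>
    rw [List.cons_append, List.idxOf_cons, List.idxOf_cons]
    by_cases hx : x == a
    · simp [hx]
    · simp only [hx, cond_false]
      have : a ∈ xs := by
        rcases List.mem_cons.mp h with h' | h'
        · exact absurd (h' ▸ beq_self_eq_true a) (by simpa [h'] using hx)
        · exact h'
      rw [ih this]

theorem myIdx_append_of_not_mem (h : a ∉ l₁) : (l₁ ++ l₂).idxOf a = l₁.length + l₂.idxOf a := by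
  induction l₁ with
  | nil => simp
  | cons x xs ih =>
    rw [List.cons_append, List.idxOf_cons]
    have hx : (x == a) = false := beq_eq_false_iff_ne.mpr (fun e => h (e ▸ List.mem_cons_self))
    simp only [hx, cond_false, List.length_cons]
    rw [ih (fun hm => h (List.mem_cons_of_mem x hm))]
    omega
end

mutual
theorem trav_main (t : OTree) (b : List ℕ) : ∀ a ∈ trav t b,
    (trav t b).idxOf a < (trav t b).length ∧
    Even ((trav t b).idxOf a + b.length + a.length) ∧
    a ∈ (trav t b).drop ((trav t b).idxOf a + 1) ∧
    Even (((trav t b).drop ((trav t b).idxOf a + 1)).idxOf a) := by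
  match t with
  | .node [] =>
    intro a ha
    have he : trav (OTree.node []) b = [b, b] := by simp [trav]
    rw [he] at ha ⊢
    have hab : a = b := by
      rcases ha with _ | ⟨_, h⟩
      · rfl
      · rcases h with _ | ⟨_, h⟩
        · rfl
        · exact absurd h List.not_mem_nil
    subst hab
    rw [myIdx_cons_self]
    refine ⟨by simp, ⟨a.length, by omega⟩, by simp, by simp [myIdx_cons_self]⟩
  | .node (t₀ :: ts) =>
    intro a ha
    have he : trav (OTree.node (t₀ :: ts)) b
        = b :: (travList (t₀ :: ts) b 0 ++ [b]) := by simp [trav]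
    set L := travList (t₀ :: ts) b 0 with hL
    rw [he] at ha ⊢
    by_cases hab : a = b
    · subst hab
      have hnot : a ∉ L := fun h => absurd (travList_mem_len (t₀ :: ts) a 0 a h) (lt_irrefl _)
      rw [myIdx_cons_self]
      have hLe := travList_len_even (t₀ :: ts) a 0
      rw [← hL] at hLe
      refine ⟨by simp, ⟨a.length, by omega⟩, ?_, ?_⟩
      · simp
      · simp only [List.drop_succ_cons, List.drop_zero]
        rw [myIdx_append_of_not_mem hnot, myIdx_cons_self]
        simpa using hLe
    · have haL : a ∈ L := by
        rcases ha with _ | ⟨_, h⟩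
        · exact absurd rfl hab
        · rcases List.mem_append.mp h with h' | h'
          · exact h'
          · rcases h' with _ | ⟨_, h''⟩
            · exact absurd rfl hab
            · exact absurd h'' List.not_mem_nil
      obtain ⟨h1, h2, h3, h4⟩ := travList_main (t₀ :: ts) b 0 a haL
      rw [← hL] at h1 h2 h3 h4
      have e0 : (L ++ [b]).idxOf a = L.idxOf a := myIdx_append_of_mem haL
      have e1 : (b :: (L ++ [b])).idxOf a = L.idxOf a + 1 := by
        rw [myIdx_cons_ne (fun h => hab h.symm), e0]
      rw [e1]
      have hd : (b :: (L ++ [b])).drop (L.idxOf a + 1 + 1)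
          = L.drop (L.idxOf a + 1) ++ [b] := by
        rw [List.drop_succ_cons, List.drop_append_of_le_length h1]
      rw [hd]
      refine ⟨?_, ?_, ?_, ?_⟩
      · simp only [List.length_cons, List.length_append, List.length_singleton]
        omega
      · rw [Nat.even_iff] at h2 ⊢; omega
      · exact List.mem_append.mpr (Or.inl h3)
      · rw [myIdx_append_of_mem h3]; exact h4
theorem travList_main (ts : List OTree) (b : List ℕ) (i : ℕ) : ∀ a ∈ travList ts b i,
    (travList ts b i).idxOf a < (travList ts b i).length ∧
    Even ((travList ts b i).idxOf a + b.length + 1 + a.length) ∧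
    a ∈ (travList ts b i).drop ((travList ts b i).idxOf a + 1) ∧
    Even (((travList ts b i).drop ((travList ts b i).idxOf a + 1)).idxOf a) := by
  match ts with
  | [] => intro a ha; simp [travList] at ha
  | t₀ :: rest =>
    intro a ha
    have he : travList (t₀ :: rest) b i
        = trav t₀ (b ++ [i]) ++ travList rest b (i + 1) := by simp [travList]
    set X := trav t₀ (b ++ [i]) with hX
    set Y := travList rest b (i + 1) with hY
    rw [he] at ha ⊢
    by_cases hx : a ∈ X
    · obtain ⟨h1, h2, h3, h4⟩ := trav_main t₀ (b ++ [i]) a hx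
      rw [← hX] at h1 h2 h3 h4
      rw [myIdx_append_of_mem hx]
      have hd : (X ++ Y).drop (X.idxOf a + 1) = X.drop (X.idxOf a + 1) ++ Y :=
        List.drop_append_of_le_length h1
      rw [hd]
      simp only [List.length_append] at h2 ⊢
      refine ⟨by omega, ?_, List.mem_append.mpr (Or.inl h3), ?_⟩
      · rw [Nat.even_iff] at h2 ⊢
        simp only [List.length_singleton] at h2
        omega
      · rw [myIdx_append_of_mem h3]; exact h4
    · have hy : a ∈ Y := by
        rcases List.mem_append.mp ha with h | h
        · exact absurd h hx
        · exact h
      obtain ⟨h1, h2, h3, h4⟩ := travList_main rest b (i + 1) a hy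
      rw [← hY] at h1 h2 h3 h4
      rw [myIdx_append_of_not_mem hx]
      have hXe := trav_len_even t₀ (b ++ [i])
      rw [← hX] at hXe
      have hd : (X ++ Y).drop (X.length + Y.idxOf a + 1) = Y.drop (Y.idxOf a + 1) := by
        have : X.length + Y.idxOf a + 1 = X.length + (Y.idxOf a + 1) := by omega
        rw [this, List.drop_append]; simp
      rw [hd]
      refine ⟨by rw [List.length_append]; omega, ?_, h3, h4⟩
      rw [Nat.even_iff] at h2 hXe ⊢
      omega
end

/-- `ν_v⁽¹⁾`: the number of visits strictly before the first visit to `v`. -/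
def nu1 (t : OTree) (a : List ℕ) : ℕ := (trav t []).idxOf a

/-- `ν_v⁽²⁾`: the number of visits strictly before the second visit to `v`. -/
def nu2 (t : OTree) (a : List ℕ) : ℕ :=
  nu1 t a + 1 + ((trav t []).drop (nu1 t a + 1)).idxOf a

/-- In the traversal `Trav`, for every vertex `v` the number of visits strictly
before the second visit to `v` is even iff the depth of `v` is odd; consequently
exactly one of `ν_v⁽¹⁾`, `ν_v⁽²⁾` is even. -/
theorem trav_second_visit_parity (t : OTree) (a : List ℕ) (ha : a ∈ trav t []) :
    (Even (nu2 t a) ↔ Odd a.length) ∧ (Even (nu1 t a) ↔ ¬ Even (nu2 t a)) := by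
  obtain ⟨-, h2, -, h4⟩ := trav_main t [] a ha
  simp only [List.length_nil, Nat.add_zero] at h2
  rw [Nat.even_iff] at h2 h4
  simp only [nu1, nu2, Nat.even_iff, Nat.odd_iff]
  omega
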